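/- arXiv:math-ph/0502021 — 5 statements merged into one kernel-verified Lean document; each statement's English description precedes it below -/
import Mathlib

section
/- Let n ≥ 1 and let U ⊆ ℝⁿ be a nonempty open connected set. If f : ℝⁿ → ℝ is real-analytic at every point of U and f is not identically zero on U, then the zero set {x ∈ U : f(x) = 0} has Lebesgue measure zero. -/
open MeasureTheory


section
variable {n : ℕ}

@[simp] lemma ins_succ (t : ℝ) (y : Fin n → ℝ) (k : Fin n) :
    Fin.insertNth (α := fun _ => ℝ) 0 t y k.succ = y k := by
  have := Fin.insertNth_apply_succAbove (i := (0 : Fin (n+1))) (α := fun _ => ℝ) (x := t) (p := y) (j := k)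
  rwa [Fin.succAbove_zero] at this

@[simp] lemma ins_zero (t : ℝ) (y : Fin n → ℝ) :
    Fin.insertNth (α := fun _ => ℝ) 0 t y 0 = t :=
  Fin.insertNth_apply_same (α := fun _ => ℝ) 0 t y

@[simp] lemma single_succ_fin (t : ℝ) (k : Fin n) :
    (Pi.single (0 : Fin (n+1)) t : Fin (n+1) → ℝ) k.succ = 0 :=
  Pi.single_eq_of_ne (Fin.succ_ne_zero k) t

lemma ins_eta (x : Fin (n+1) → ℝ) :
    Fin.insertNth (α := fun _ => ℝ) 0 (x 0) (fun k => x k.succ) = x := by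
  funext j
  cases j using Fin.cases with
  | zero => simp
  | succ k => simp

lemma aux_affine {E G : Type*} [NormedAddCommGroup E] [NormedSpace ℝ E]
    [NormedAddCommGroup G] [NormedSpace ℝ G]
    {f : G → ℝ} (L : E →L[ℝ] G) (c : G) {x : E}
    (hf : AnalyticAt ℝ f (L x + c)) : AnalyticAt ℝ (fun y => f (L y + c)) x := by
  have h1 : AnalyticAt ℝ (fun y : E => L y + c) x := (L.analyticAt x).add analyticAt_const
  exact AnalyticAt.comp (f := fun y => L y + c) hf h1

noncomputable def insLy (n : ℕ) : (Fin n → ℝ) →L[ℝ] (Fin (n+1) → ℝ) :=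
  LinearMap.toContinuousLinearMap
  { toFun := fun y => Fin.insertNth (α := fun _ => ℝ) 0 0 y
    map_add' := by
      intro p q; funext j
      cases j using Fin.cases with
      | zero => simp
      | succ k => simp
    map_smul' := by
      intro c p; funext j
      cases j using Fin.cases with
      | zero => simp
      | succ k => simp }

noncomputable def insLt (n : ℕ) : ℝ →L[ℝ] (Fin (n+1) → ℝ) :=
  LinearMap.toContinuousLinearMap
  { toFun := fun t => Fin.insertNth (α := fun _ => ℝ) 0 t 0
    map_add' := by
      intro p q; funext j
      cases j using Fin.cases with
      | zero => simp
      | succ k => simp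
    map_smul' := by
      intro c p; funext j
      cases j using Fin.cases with
      | zero => simp
      | succ k => simp }

lemma ins_split (t : ℝ) (y : Fin n → ℝ) :
    Fin.insertNth (α := fun _ => ℝ) 0 t y = insLy n y + insLt n t := by
  funext j
  cases j using Fin.cases with
  | zero => simp [insLy, insLt]
  | succ k => simp [insLy, insLt]

lemma ins_split' (t : ℝ) (y : Fin n → ℝ) :
    Fin.insertNth (α := fun _ => ℝ) 0 t y = insLt n t + insLy n y := by
  rw [ins_split]; exact add_comm _ _

end

lemma aux_countable_of_isolated {X : Type*} [TopologicalSpace X]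
    [SecondCountableTopology X]
    {S : Set X} (h : ∀ x ∈ S, ∃ V : Set X, IsOpen V ∧ x ∈ V ∧ V ∩ S ⊆ {x}) :
    S.Countable := by
  obtain ⟨b, hbc, -, hbB⟩ := TopologicalSpace.exists_countable_basis X
  choose! V hVo hxV hVS using h
  have h2 : ∀ x ∈ S, ∃ B ∈ b, x ∈ B ∧ B ⊆ V x := fun x hx =>
    hbB.exists_subset_of_mem_open (hxV x hx) (hVo x hx)
  choose! B hBb hxB hBV using h2
  have hinj : S.InjOn B := by
    intro x hx y hy hxy
    have hmem : x ∈ V y ∩ S := ⟨(hBV y hy) (hxy ▸ hxB x hx), hx⟩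
    exact hVS y hy hmem
  exact Set.countable_of_injective_of_countable_image hinj
    (hbc.mono (by rintro _ ⟨x, hx, rfl⟩; exact hBb x hx))

lemma aux_countable_zero_set_1d {a b : ℝ} {h : ℝ → ℝ}
    (hh : AnalyticOnNhd ℝ h (Set.Ioo a b)) {t₁ : ℝ} (ht₁ : t₁ ∈ Set.Ioo a b)
    (hne : h t₁ ≠ 0) : {t ∈ Set.Ioo a b | h t = 0}.Countable := by
  apply aux_countable_of_isolated
  rintro t ⟨htI, htz⟩
  rcases (hh t htI).eventually_eq_zero_or_eventually_ne_zero with hz | hnz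
  · have hev : h =ᶠ[nhds t] 0 := hz.mono fun z hz => by simpa using hz
    have := hh.eqOn_zero_of_preconnected_of_eventuallyEq_zero isPreconnected_Ioo htI hev ht₁
    exact absurd (by simpa using this) hne
  · rw [eventually_nhdsWithin_iff] at hnz
    obtain ⟨W, hW, hWo, htW⟩ := eventually_nhds_iff.1 hnz
    refine ⟨W, hWo, htW, ?_⟩
    rintro z ⟨hzW, _, hz0⟩
    by_contra hzt
    exact (hW z hzW (by simpa using hzt)) hz0

lemma aux_box : ∀ (n : ℕ) (f : (Fin n → ℝ) → ℝ) (a b : Fin n → ℝ),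
    AnalyticOnNhd ℝ f (Set.pi Set.univ fun i => Set.Ioo (a i) (b i)) →
    (∃ x ∈ Set.pi Set.univ fun i => Set.Ioo (a i) (b i), f x ≠ 0) →
    volume {x ∈ Set.pi Set.univ fun i => Set.Ioo (a i) (b i) | f x = 0} = 0 := by
  intro n
  induction n with
  | zero =>
    rintro f a b _ ⟨x₀, -, hx₀⟩
    have hempty : {x ∈ Set.pi Set.univ fun i : Fin 0 => Set.Ioo (a i) (b i) | f x = 0} = ∅ := by
      ext x
      simp only [Set.mem_setOf_eq, Set.mem_empty_iff_false, iff_false, not_and]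
      intro _
      rw [Subsingleton.elim x x₀]
      exact hx₀
    rw [hempty, measure_empty]
  | succ n IH =>
    rintro f a b hf ⟨x₀, hx₀Q, hx₀⟩
    set Q : Set (Fin (n+1) → ℝ) := Set.pi Set.univ fun i => Set.Ioo (a i) (b i) with hQdef
    set Q' : Set (Fin n → ℝ) := Set.pi Set.univ fun k => Set.Ioo (a k.succ) (b k.succ) with hQ'def
    set I : Set ℝ := Set.Ioo (a 0) (b 0) with hIdef
    -- membership splitting
    have hmem : ∀ (t : ℝ) (y : Fin n → ℝ),
        Fin.insertNth (α := fun _ => ℝ) 0 t y ∈ Q ↔ t ∈ I ∧ y ∈ Q' := by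
      intro t y
      simp only [hQdef, hQ'def, Set.mem_univ_pi]
      constructor
      · intro hm
        exact ⟨by simpa [hIdef] using hm 0, fun k => by simpa using hm k.succ⟩
      · rintro ⟨ht, hy⟩ i
        cases i using Fin.cases with
        | zero => simpa [hIdef] using ht
        | succ k => simpa using hy k
    -- analyticity of slices in y for fixed t
    have hslice_y : ∀ t ∈ I, AnalyticOnNhd ℝ (fun y => f (Fin.insertNth (α := fun _ => ℝ) 0 t y)) Q' := by
      intro t ht y hy
      have hx : Fin.insertNth (α := fun _ => ℝ) 0 t y ∈ Q := (hmem t y).2 ⟨ht, hy⟩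
      have hfa : AnalyticAt ℝ f (insLy n y + insLt n t) := by
        rw [← ins_split]; exact hf _ hx
      have := aux_affine (insLy n) (insLt n t) hfa
      have heq : (fun z => f (insLy n z + insLt n t)) =
          fun z => f (Fin.insertNth (α := fun _ => ℝ) 0 t z) := by
        funext z; rw [← ins_split]
      rwa [heq] at this
    -- analyticity of slices in t for fixed y
    have hslice_t : ∀ y ∈ Q', AnalyticOnNhd ℝ (fun t => f (Fin.insertNth (α := fun _ => ℝ) 0 t y)) I := by
      intro y hy t ht
      have hx : Fin.insertNth (α := fun _ => ℝ) 0 t y ∈ Q := (hmem t y).2 ⟨ht, hy⟩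
      have hfa : AnalyticAt ℝ f (insLt n t + insLy n y) := by
        rw [← ins_split']; exact hf _ hx
      have := aux_affine (insLt n) (insLy n y) hfa
      have heq : (fun s => f (insLt n s + insLy n y)) =
          fun s => f (Fin.insertNth (α := fun _ => ℝ) 0 s y) := by
        funext s; rw [← ins_split']
      rwa [heq] at this
    -- decompose x₀
    set t₀ : ℝ := x₀ 0 with ht₀def
    set y₀ : Fin n → ℝ := fun k => x₀ k.succ with hy₀def
    have hx₀split : Fin.insertNth (α := fun _ => ℝ) 0 t₀ y₀ = x₀ := ins_eta x₀
    have ht₀I : t₀ ∈ I := by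
      have := (hmem t₀ y₀).1 (by rw [hx₀split]; exact hx₀Q)
      exact this.1
    have hy₀Q' : y₀ ∈ Q' := by
      have := (hmem t₀ y₀).1 (by rw [hx₀split]; exact hx₀Q)
      exact this.2
    -- bad set E is null
    have hE : volume {y ∈ Q' | ∀ t ∈ I, f (Fin.insertNth (α := fun _ => ℝ) 0 t y) = 0} = 0 := by
      have hgnull : volume {y ∈ Q' | f (Fin.insertNth (α := fun _ => ℝ) 0 t₀ y) = 0} = 0 := by
        refine IH _ (fun k => a k.succ) (fun k => b k.succ) (hslice_y t₀ ht₀I) ?_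
        exact ⟨y₀, hy₀Q', by rw [hx₀split]; exact hx₀⟩
      refine measure_mono_null ?_ hgnull
      rintro y ⟨hy, hall⟩
      exact ⟨hy, hall t₀ ht₀I⟩
    -- measurability of Z
    set Z : Set (Fin (n+1) → ℝ) := {x ∈ Q | f x = 0} with hZdef
    have hQo : IsOpen Q := by
      apply isOpen_set_pi Set.finite_univ
      intro i _
      exact isOpen_Ioo
    have hZm : MeasurableSet Z := by
      have ho : IsOpen (Q ∩ f ⁻¹' {(0:ℝ)}ᶜ) :=
        hf.continuousOn.isOpen_inter_preimage hQo isOpen_compl_singleton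
      have : Z = Q \ (Q ∩ f ⁻¹' {(0:ℝ)}ᶜ) := by
        ext x
        simp only [hZdef, Set.mem_setOf_eq, Set.mem_diff, Set.mem_inter_iff, Set.mem_preimage,
          Set.mem_compl_iff, Set.mem_singleton_iff]
        tauto
      rw [this]
      exact hQo.measurableSet.diff ho.measurableSet
    -- transfer to product space
    set e := MeasurableEquiv.piFinSuccAbove (fun _ : Fin (n+1) => ℝ) 0 with hedef
    set S : Set (ℝ × (Fin n → ℝ)) := e.symm ⁻¹' Z with hSdef
    have hSm : MeasurableSet S := e.symm.measurable hZm
    have hvol : volume Z = (volume.prod volume) S := by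
      have := (MeasureTheory.volume_preserving_piFinSuccAbove (fun _ : Fin (n+1) => ℝ) 0).symm
      rw [← this.measure_preimage hZm.nullMeasurableSet, ← Measure.volume_eq_prod]
    have hslice_eq : ∀ y : Fin n → ℝ,
        ((fun t => (t, y)) ⁻¹' S) = {t | Fin.insertNth (α := fun _ => ℝ) 0 t y ∈ Z} := by
      intro y
      ext t
      simp only [hSdef, Set.mem_preimage, Set.mem_setOf_eq, hedef,
        MeasurableEquiv.piFinSuccAbove_symm_apply, Fin.insertNthEquiv, Equiv.coe_fn_mk]
    -- a.e. slices are null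
    have hae : ∀ᵐ y : Fin n → ℝ, volume {t | Fin.insertNth (α := fun _ => ℝ) 0 t y ∈ Z} = 0 := by
      have h1 : ∀ᵐ y : Fin n → ℝ,
          y ∉ {y ∈ Q' | ∀ t ∈ I, f (Fin.insertNth (α := fun _ => ℝ) 0 t y) = 0} :=
        measure_eq_zero_iff_ae_notMem.mp hE
      filter_upwards [h1] with y hy
      by_cases hyQ' : y ∈ Q'
      · have : ∃ t₁ ∈ I, f (Fin.insertNth (α := fun _ => ℝ) 0 t₁ y) ≠ 0 := by
          by_contra hcon
          push_neg at hcon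
          exact hy ⟨hyQ', hcon⟩
        obtain ⟨t₁, ht₁, hft₁⟩ := this
        have hcnt : {t ∈ I | f (Fin.insertNth (α := fun _ => ℝ) 0 t y) = 0}.Countable :=
          aux_countable_zero_set_1d (hslice_t y hyQ') ht₁ hft₁
        have hseq : {t | Fin.insertNth (α := fun _ => ℝ) 0 t y ∈ Z} =
            {t ∈ I | f (Fin.insertNth (α := fun _ => ℝ) 0 t y) = 0} := by
          ext t
          simp only [hZdef, Set.mem_setOf_eq, hmem t y]
          tauto
        rw [hseq]
        exact hcnt.measure_zero _
      · have hseq : {t | Fin.insertNth (α := fun _ => ℝ) 0 t y ∈ Z} = ∅ := by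
          ext t
          simp only [hZdef, Set.mem_setOf_eq, Set.mem_empty_iff_false, iff_false, not_and, hmem t y]
          tauto
        rw [hseq, measure_empty]
    -- conclude by Fubini
    calc volume Z = (volume.prod volume) S := hvol
      _ = ∫⁻ y, volume ((fun t => (t, y)) ⁻¹' S) := Measure.prod_apply_symm hSm
      _ = ∫⁻ _y : Fin n → ℝ, 0 := by
          refine lintegral_congr_ae ?_
          filter_upwards [hae] with y hy
          rw [hslice_eq y, hy]
      _ = 0 := lintegral_zero

/-- **Lemma 5.1 (real case).** If `f : ℝⁿ → ℝ` is real-analytic on a nonempty open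
connected set `U` and is not identically zero on `U`, then its zero set inside `U`
has Lebesgue measure zero. -/
theorem zero_set_of_analyticOnNhd_real_volume_eq_zero
    (n : ℕ) (hn : 1 ≤ n) (U : Set (Fin n → ℝ))
    (hUne : U.Nonempty) (hUopen : IsOpen U) (hUconn : IsConnected U)
    (f : (Fin n → ℝ) → ℝ) (hf : AnalyticOnNhd ℝ f U)
    (hne : ¬ (∀ x ∈ U, f x = 0)) :
    volume {x | x ∈ U ∧ f x = 0} = 0 := by
  push_neg at hne
  obtain ⟨x₁, hx₁U, hx₁⟩ := hne
  have hball : ∀ x ∈ U, ∃ r > 0, Metric.ball x r ⊆ U := fun x hx =>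
    Metric.isOpen_iff.1 hUopen x hx
  choose! r hr hrU using hball
  obtain ⟨T, hTc, hTU⟩ := TopologicalSpace.isOpen_iUnion_countable
    (fun x : U => Metric.ball (x : Fin n → ℝ) (r x)) (fun _ => Metric.isOpen_ball)
  have hUsub : U ⊆ ⋃ x ∈ T, Metric.ball (x : Fin n → ℝ) (r x) := by
    rw [hTU]
    intro z hz
    exact Set.mem_iUnion.2 ⟨⟨z, hz⟩, Metric.mem_ball_self (hr z hz)⟩
  have hsub : {x | x ∈ U ∧ f x = 0} ⊆
      ⋃ x ∈ T, {z ∈ Metric.ball (x : Fin n → ℝ) (r x) | f z = 0} := by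
    rintro z ⟨hzU, hz0⟩
    obtain ⟨x, hxT, hzball⟩ := Set.mem_iUnion₂.1 (hUsub hzU)
    exact Set.mem_iUnion₂.2 ⟨x, hxT, hzball, hz0⟩
  refine measure_mono_null hsub ((measure_biUnion_null_iff hTc).2 ?_)
  rintro ⟨x, hxU⟩ -
  -- each ball is a box
  have hrx : 0 < r x := hr x hxU
  have hballbox : Metric.ball x (r x) =
      Set.pi Set.univ fun i => Set.Ioo (x i - r x) (x i + r x) := by
    rw [ball_pi _ hrx]
    exact Set.pi_congr rfl fun i _ => Real.ball_eq_Ioo (x i) (r x)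
  have hbsub : Metric.ball x (r x) ⊆ U := hrU x hxU
  have hfa : AnalyticOnNhd ℝ f (Set.pi Set.univ fun i => Set.Ioo (x i - r x) (x i + r x)) := by
    rw [← hballbox]; exact hf.mono hbsub
  have hnev : ∃ z ∈ Set.pi Set.univ fun i => Set.Ioo (x i - r x) (x i + r x), f z ≠ 0 := by
    by_contra hcon
    push_neg at hcon
    rw [← hballbox] at hcon
    have hev : f =ᶠ[nhds x] 0 := by
      refine Filter.eventuallyEq_iff_exists_mem.2 ⟨Metric.ball x (r x),
        Metric.ball_mem_nhds x hrx, fun z hz => by simpa using hcon z hz⟩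
    have := hf.eqOn_zero_of_preconnected_of_eventuallyEq_zero hUconn.isPreconnected hxU hev hx₁U
    exact hx₁ (by simpa using this)
  have := aux_box n f (fun i => x i - r x) (fun i => x i + r x) hfa hnev
  rw [hballbox]
  exact this
end

section
/- Let L be a finite-dimensional real Lie algebra, equipped with its canonical topology as a finite-dimensional real vector space, and let μ be an additive Haar measure on L. Then the set of elements of L that are not regular, i.e. {x ∈ L : ¬ LieAlgebra.IsRegular ℝ x}, has μ-measure zero. -/
open MeasureTheory

open MvPolynomial in
lemma aux_mvpoly_zero_set_volume_eq_zero :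
    ∀ (n : ℕ) (p : MvPolynomial (Fin n) ℝ), p ≠ 0 →
      volume {x : Fin n → ℝ | eval x p = 0} = 0 := by
  intro n
  induction n with
  | zero =>
    intro p hp
    convert measure_empty (μ := volume)
    ext x
    simp only [Set.mem_setOf_eq, Set.mem_empty_iff_false, iff_false]
    obtain ⟨c, rfl⟩ := MvPolynomial.C_surjective (Fin 0) p
    intro h
    apply hp
    have hc : c = 0 := by simpa using h
    simp [hc]
  | succ n ih =>
    intro p hp
    set P : Polynomial (MvPolynomial (Fin n) ℝ) := finSuccEquiv ℝ n p with hP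
    have hPne : P ≠ 0 := by
      simpa [hP] using (map_ne_zero_iff _ (finSuccEquiv ℝ n).injective).mpr hp
    -- transfer to the product space
    have hmp := MeasureTheory.volume_preserving_piFinSuccAbove (fun _ : Fin (n + 1) => ℝ) 0
    set π := MeasurableEquiv.piFinSuccAbove (fun _ : Fin (n + 1) => ℝ) 0
    set T : Set (ℝ × (Fin n → ℝ)) := {q | eval (Fin.cons q.1 q.2) p = 0} with hT
    have hTmeas : MeasurableSet T := by
      have : Continuous fun q : ℝ × (Fin n → ℝ) => eval (Fin.cons q.1 q.2) p := by
        apply (MvPolynomial.continuous_eval p).comp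
        refine continuous_pi fun i => ?_
        refine Fin.cases ?_ (fun j => ?_) i
        · simpa using continuous_fst
        · simpa [Function.comp_def] using (continuous_apply j).comp continuous_snd
      exact this.measurable (measurableSet_singleton 0)
    have hset : {x : Fin (n + 1) → ℝ | eval x p = 0} = π ⁻¹' T := by
      ext x
      have hrm : (0 : Fin (n+1)).removeNth x = Fin.tail x := by
        funext j
        simp [Fin.removeNth, Fin.succAbove_zero, Fin.tail]
      have hx : (Fin.cons (x 0) ((0 : Fin (n+1)).removeNth x) : Fin (n+1) → ℝ) = x := by
        rw [hrm]; exact Fin.cons_self_tail x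
      simp only [Set.mem_setOf_eq, Set.mem_preimage, hT, π,
        MeasurableEquiv.piFinSuccAbove_apply]
      rw [show ((Fin.insertNthEquiv (fun _ : Fin (n+1) => ℝ) 0).symm x)
          = (x 0, (0 : Fin (n+1)).removeNth x) from rfl]
      rw [hx]
    rw [hset, hmp.measure_preimage_equiv]
    -- now Fubini
    rw [MeasureTheory.Measure.volume_eq_prod, MeasureTheory.Measure.measure_prod_null hTmeas]
    -- bad set of first coordinates
    set B : Set ℝ := {a : ℝ | Polynomial.eval (MvPolynomial.C a) P = 0} with hB
    have hBfin : B.Finite := by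
      have : B = (fun a : ℝ => (MvPolynomial.C a : MvPolynomial (Fin n) ℝ)) ⁻¹'
          {z | P.IsRoot z} := rfl
      rw [this]
      exact Set.Finite.preimage (MvPolynomial.C_injective _ _).injOn
        (Polynomial.finite_setOf_isRoot hPne)
    have hBnull : volume B = 0 := hBfin.measure_zero _
    have hae : ∀ᵐ a : ℝ, a ∉ B := (MeasureTheory.measure_eq_zero_iff_ae_notMem).mp hBnull
    filter_upwards [hae] with a ha
    have key : ∀ y : Fin n → ℝ,
        eval (Fin.cons a y : Fin (n+1) → ℝ) p = eval y (Polynomial.eval (MvPolynomial.C a) P) := by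
      intro y
      rw [eval_eq_eval_mv_eval']
      rw [Polynomial.eval_map]
      conv_rhs => rw [Polynomial.eval, Polynomial.hom_eval₂]
      simp [hP]
    have hsec : (Prod.mk a ⁻¹' T) = {y : Fin n → ℝ |
        eval y (Polynomial.eval (MvPolynomial.C a) P) = 0} := by
      ext y; simp [hT, key y]
    simp only [Pi.zero_apply]
    rw [hsec]
    exact ih _ ha

/-- **Proposition 5.2 (Lie algebra case).** In a finite-dimensional real Lie algebra,
endowed with its canonical topology as a finite-dimensional real vector space, the set
of non-regular (i.e. singular) elements has measure zero for any additive Haar measure. -/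
theorem singular_set_of_lieAlgebra_measure_eq_zero
    (L : Type*) [LieRing L] [LieAlgebra ℝ L] [FiniteDimensional ℝ L]
    [TopologicalSpace L] [IsTopologicalAddGroup L] [ContinuousSMul ℝ L] [T2Space L]
    [MeasurableSpace L] [BorelSpace L]
    (μ : Measure L) [μ.IsAddHaarMeasure] :
    μ {x : L | ¬ LieAlgebra.IsRegular ℝ x} = 0 := by
  classical
  set n := Module.finrank ℝ L
  let b : Module.Basis (Fin n) ℝ L := Module.finBasis ℝ L
  set p := (LinearMap.polyCharpoly (LieAlgebra.ad ℝ L : L →ₗ[ℝ] Module.End ℝ L) b).coeff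
    (LieAlgebra.rank ℝ L) with hp
  have hpne : p ≠ 0 := LieAlgebra.polyCharpoly_coeff_rank_ne_zero (R := ℝ) (L := L) (b := b)
  let e : L ≃L[ℝ] (Fin n → ℝ) := (b.equivFun).toContinuousLinearEquiv
  set Z : Set (Fin n → ℝ) := {y | MvPolynomial.eval y p = 0} with hZ
  have hZmeas : MeasurableSet Z :=
    (MvPolynomial.continuous_eval p).measurable (measurableSet_singleton 0)
  have hset : {x : L | ¬ LieAlgebra.IsRegular ℝ x} = ⇑e ⁻¹' Z := by
    ext x
    have := LieAlgebra.isRegular_iff_coeff_polyCharpoly_rank_ne_zero (R := ℝ) (L := L) (b := b) x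
    simp only [Set.mem_setOf_eq, Set.mem_preimage, this, not_not, hZ]
    have : ⇑(b.repr x) = e x := rfl
    rw [this]
  rw [hset, ← MeasureTheory.Measure.map_apply e.continuous.measurable hZmeas]
  haveI : (μ.map e).IsAddHaarMeasure := e.isAddHaarMeasure_map μ
  have habs : (μ.map ⇑e) ≪ (volume : Measure (Fin n → ℝ)) :=
    MeasureTheory.Measure.absolutelyContinuous_isAddHaarMeasure _ _
  exact habs (aux_mvpoly_zero_set_volume_eq_zero n p hpne)
end

section
/- Let n ≥ 1. The set of real n×n matrices whose characteristic polynomial is not squarefree, i.e. {A : Matrix (Fin n) (Fin n) ℝ | ¬ (Matrix.charpoly A).Squarefree}, has measure zero with respect to the Lebesgue (additive Haar) measure on the real vector space of n×n real matrices. -/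
open MeasureTheory Polynomial

lemma mvpoly_zero_set_null :
    ∀ (d : ℕ) (F : MvPolynomial (Fin d) ℝ), F ≠ 0 →
      volume {x : Fin d → ℝ | MvPolynomial.eval x F = 0} = 0 := by
  intro d
  induction d with
  | zero =>
    intro F hF
    obtain ⟨c, rfl⟩ := MvPolynomial.C_surjective (Fin 0) F
    have hc : c ≠ 0 := fun h => hF (by simp [h])
    convert measure_empty
    · ext x; simp [hc]
    · infer_instance
  | succ d ih =>
    intro F hF
    set q : Polynomial (MvPolynomial (Fin d) ℝ) := MvPolynomial.finSuccEquiv ℝ d F with hq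
    have hq0 : q ≠ 0 := by
      simp [hq, hF]
    set c : MvPolynomial (Fin d) ℝ := q.leadingCoeff with hc
    have hc0 : c ≠ 0 := by simpa [hc] using hq0
    -- the swapped set
    set t : Set ((Fin d → ℝ) × ℝ) :=
      {p | MvPolynomial.eval (Fin.cons p.2 p.1) F = 0} with ht
    have htm : MeasurableSet t := by
      have : Continuous fun p : (Fin d → ℝ) × ℝ =>
          MvPolynomial.eval (Fin.cons p.2 p.1) F := by
        apply (MvPolynomial.continuous_eval F).comp
        apply continuous_pi
        intro i
        refine Fin.cases ?_ ?_ i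
        · simpa using continuous_snd
        · intro j; exact (continuous_apply j).comp continuous_fst
      exact (isClosed_singleton.preimage this).measurableSet
    have key : ((volume : Measure (Fin d → ℝ)).prod (volume : Measure ℝ)) t = 0 := by
      rw [Measure.measure_prod_null htm]
      have hsub : {y : Fin d → ℝ | MvPolynomial.eval y c ≠ 0} ⊆
          {y | (volume : Measure ℝ) (Prod.mk y ⁻¹' t) = 0} := by
        intro y hy
        have hpy : (q.map (MvPolynomial.eval y)) ≠ 0 := by
          intro h
          apply hy
          rw [hc, Polynomial.leadingCoeff, ← Polynomial.coeff_map, h, Polynomial.coeff_zero]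
        have : Prod.mk y ⁻¹' t ⊆ {z : ℝ | (q.map (MvPolynomial.eval y)).IsRoot z} := by
          intro z hz
          simp only [ht, Set.mem_preimage, Set.mem_setOf_eq] at hz
          rw [MvPolynomial.eval_eq_eval_mv_eval'] at hz
          exact hz
        refine measure_mono_null this ?_
        exact Set.Finite.measure_zero (Polynomial.finite_setOf_isRoot hpy) _
      refine Filter.eventually_of_mem ?_ hsub
      rw [mem_ae_iff]
      have : {y : Fin d → ℝ | MvPolynomial.eval y c ≠ 0}ᶜ
          = {y | MvPolynomial.eval y c = 0} := by ext y; simp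
      rw [this]
      exact ih c hc0
    -- transfer back via the measurable equiv
    have hmp := (measurePreserving_piFinSuccAbove (fun _ : Fin (d + 1) => (volume : Measure ℝ)) 0)
    set e := MeasurableEquiv.piFinSuccAbove (fun _ : Fin (d + 1) => ℝ) 0 with he
    have h1 : {x : Fin (d + 1) → ℝ | MvPolynomial.eval x F = 0}
        = e ⁻¹' (Prod.swap ⁻¹' t) := by
      ext x
      have hx : (Fin.cons (x 0) (fun j => x (Fin.succAbove 0 j)) : Fin (d+1) → ℝ) = x := by
        funext j
        refine Fin.cases ?_ ?_ j <;> simp [Fin.succAbove_zero]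
      simp only [Set.mem_setOf_eq, Set.mem_preimage, ht, he, MeasurableEquiv.piFinSuccAbove,
        MeasurableEquiv.coe_mk, Prod.swap]
      show MvPolynomial.eval x F = 0 ↔
        MvPolynomial.eval (Fin.cons (x 0) (fun j => x (Fin.succAbove 0 j))) F = 0
      rw [hx]
    have h3 := hmp.measure_preimage (s := Prod.swap ⁻¹' t)
      ((htm.preimage measurable_swap).nullMeasurableSet)
    have h2 : ((volume : Measure ℝ).prod (volume : Measure (Fin d → ℝ))) (Prod.swap ⁻¹' t) = 0 := by
      rw [← Measure.prod_swap, Measure.map_apply measurable_swap (htm.preimage measurable_swap)]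
      convert key using 2
      ext p; simp
    rw [h1, volume_pi, h3, ← volume_pi, h2]

variable {R S : Type*} [CommRing R] [CommRing S] {n : ℕ}

lemma aeval_matrix_map (φ : R →+* S) (M : Matrix (Fin n) (Fin n) R) (p : R[X]) :
    (Polynomial.aeval M p).map φ = Polynomial.aeval (M.map φ) (p.map φ) := by
  change φ.mapMatrix (Polynomial.aeval M p) = _
  rw [Polynomial.aeval_def, Polynomial.aeval_def, Polynomial.hom_eval₂, Polynomial.eval₂_map]
  congr 1
  ext r : 1
  ext i j
  simp [Matrix.algebraMap_matrix_apply, apply_ite φ]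

noncomputable def discAux (n : ℕ) {R : Type*} [CommRing R] (M : Matrix (Fin n) (Fin n) R) : R :=
  (Polynomial.aeval M (derivative M.charpoly)).det

lemma discAux_map (φ : R →+* S) (M : Matrix (Fin n) (Fin n) R) :
    φ (discAux n M) = discAux n (M.map φ) := by
  rw [discAux, discAux, RingHom.map_det]
  rw [show φ.mapMatrix ((aeval M) (derivative M.charpoly))
      = ((aeval M) (derivative M.charpoly)).map φ from rfl]
  rw [aeval_matrix_map, ← Polynomial.derivative_map, Matrix.charpoly_map]

lemma charpoly_eval {K : Type*} [CommRing K] (A : Matrix (Fin n) (Fin n) K) (z : K) :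
    A.charpoly.eval z = (z • (1 : Matrix (Fin n) (Fin n) K) - A).det := by
  rw [Matrix.charpoly, ← Polynomial.coe_evalRingHom, RingHom.map_det]
  congr 1
  ext i j
  by_cases h : i = j
  · subst h; simp [Matrix.charmatrix_apply_eq]
  · simp [Matrix.charmatrix_apply_ne _ _ _ h, Matrix.one_apply_ne h]

lemma det_aeval_multiset_prod (A : Matrix (Fin n) (Fin n) ℂ) (s : Multiset ℂ) :
    (Polynomial.aeval A (s.map fun a => X - C a).prod).det
      = (s.map fun a => (A - a • (1 : Matrix (Fin n) (Fin n) ℂ)).det).prod := by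
  induction s using Multiset.induction_on with
  | empty => simp
  | cons a s ih =>
    rw [Multiset.map_cons, Multiset.prod_cons, map_mul, Matrix.det_mul, Multiset.map_cons,
      Multiset.prod_cons, ← ih]
    congr 1
    rw [map_sub, Polynomial.aeval_X, Polynomial.aeval_C, Algebra.algebraMap_eq_smul_one]

lemma det_aeval_eq_zero_iff (hn : 1 ≤ n) (A : Matrix (Fin n) (Fin n) ℂ) {q : ℂ[X]} (hq : q ≠ 0) :
    (Polynomial.aeval A q).det = 0 ↔ ∃ z : ℂ, q.IsRoot z ∧ A.charpoly.IsRoot z := by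
  have hsplit : q = C q.leadingCoeff * (q.roots.map fun a => X - C a).prod :=
    Polynomial.Splits.eq_prod_roots (IsAlgClosed.splits q)
  have hlc : q.leadingCoeff ≠ 0 := Polynomial.leadingCoeff_ne_zero.mpr hq
  conv_lhs => rw [hsplit]
  rw [map_mul, Matrix.det_mul, det_aeval_multiset_prod, Polynomial.aeval_C,
    Algebra.algebraMap_eq_smul_one, Matrix.det_smul, Matrix.det_one, Fintype.card_fin]
  rw [mul_one, mul_eq_zero]
  have h1 : q.leadingCoeff ^ n ≠ 0 := pow_ne_zero _ hlc
  simp only [h1, false_or, Multiset.prod_eq_zero_iff, Multiset.mem_map]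
  constructor
  · rintro ⟨z, hz, hdet⟩
    refine ⟨z, (Polynomial.mem_roots hq).1 hz, ?_⟩
    rw [Polynomial.IsRoot, charpoly_eval]
    have : z • (1 : Matrix (Fin n) (Fin n) ℂ) - A = -(A - z • 1) := by rw [neg_sub]
    rw [this, Matrix.det_neg, hdet, mul_zero]
  · rintro ⟨z, hz1, hz2⟩
    refine ⟨z, (Polynomial.mem_roots hq).2 hz1, ?_⟩
    rw [Polynomial.IsRoot, charpoly_eval] at hz2
    have : A - z • (1 : Matrix (Fin n) (Fin n) ℂ) = -(z • 1 - A) := by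
      rw [neg_sub]
    rw [this, Matrix.det_neg, hz2, mul_zero]

lemma discAux_eq_zero_iff (hn : 1 ≤ n) (A : Matrix (Fin n) (Fin n) ℝ) :
    discAux n A = 0 ↔ ¬ Squarefree A.charpoly := by
  set p := A.charpoly with hp
  have hpm : p.Monic := A.charpoly_monic
  have hpdeg : p.natDegree = n := by
    rw [hp, Matrix.charpoly_natDegree_eq_dim, Fintype.card_fin]
  have hd0 : derivative p ≠ 0 := by
    intro h
    have := Polynomial.natDegree_eq_zero_of_derivative_eq_zero h
    omega
  set φ := algebraMap ℝ ℂ with hφ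
  have hφinj : Function.Injective φ := (algebraMap ℝ ℂ).injective
  set B := A.map φ with hB
  have hBcp : B.charpoly = p.map φ := by rw [hB, Matrix.charpoly_map]
  -- step 1 : discAux A = 0 ↔ common complex root
  have step1 : discAux n A = 0 ↔ ∃ z : ℂ, (p.map φ).IsRoot z ∧ ((derivative p).map φ).IsRoot z := by
    rw [show (0 : ℝ) = (0 : ℝ) from rfl, ← map_eq_zero_iff φ hφinj, discAux_map]
    have : discAux n B = (Polynomial.aeval B ((derivative p).map φ)).det := by
      rw [discAux, hBcp, ← Polynomial.derivative_map]
    rw [← hB, this, det_aeval_eq_zero_iff hn B (by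
      simpa [Polynomial.map_eq_zero_iff hφinj] using hd0)]
    constructor
    · rintro ⟨z, h1, h2⟩; exact ⟨z, by rwa [hBcp] at h2, h1⟩
    · rintro ⟨z, h1, h2⟩; exact ⟨z, h2, by rwa [hBcp]⟩
  -- step 2 : common complex root ↔ not coprime over ℝ
  have step2 : (∃ z : ℂ, (p.map φ).IsRoot z ∧ ((derivative p).map φ).IsRoot z)
      ↔ ¬ IsCoprime p (derivative p) := by
    constructor
    · rintro ⟨z, h1, h2⟩ hcop
      obtain ⟨a, b, hab⟩ := hcop.map (Polynomial.mapRingHom φ)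
      have := congrArg (Polynomial.eval z) hab
      simp only [Polynomial.eval_add, Polynomial.eval_mul, Polynomial.coe_mapRingHom,
        Polynomial.eval_one] at this
      rw [Polynomial.IsRoot] at h1 h2
      rw [h1, h2, mul_zero, mul_zero, add_zero] at this
      exact zero_ne_one this
    · intro hncop
      set g := EuclideanDomain.gcd p (derivative p) with hg
      have hgu : ¬ IsUnit g := fun h => hncop (EuclideanDomain.gcd_isUnit_iff.mp h)
      have hg0 : g ≠ 0 := by
        intro h
        rw [hg] at h
        have := EuclideanDomain.gcd_eq_zero_iff.mp h
        exact hpm.ne_zero this.1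
      have hgdeg : (g.map φ).degree ≠ 0 := by
        rw [Polynomial.degree_map_eq_of_injective hφinj]
        intro h
        exact hgu (Polynomial.isUnit_iff_degree_eq_zero.mpr h)
      have hgdeg' : 0 < (g.map φ).degree := by
        rw [Polynomial.degree_map_eq_of_injective hφinj] at hgdeg ⊢
        rcases lt_or_eq_of_le (Polynomial.zero_le_degree_iff.mpr hg0) with h | h
        · exact h
        · exact absurd h.symm hgdeg
      obtain ⟨z, hz⟩ := Complex.exists_root hgdeg'
      have hroot : ∀ r : ℝ[X], g ∣ r → (r.map φ).IsRoot z := by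
        intro r hdvd
        obtain ⟨k, hk⟩ := hdvd
        rw [hk, Polynomial.map_mul, Polynomial.IsRoot, Polynomial.eval_mul, hz, zero_mul]
      exact ⟨z, hroot p (EuclideanDomain.gcd_dvd_left _ _),
        hroot _ (EuclideanDomain.gcd_dvd_right _ _)⟩
  rw [step1, step2]
  rw [← Polynomial.separable_def, not_iff_not]
  exact PerfectField.separable_iff_squarefree

lemma charpoly_diagonal_real (v : Fin n → ℝ) :
    (Matrix.diagonal v).charpoly = ∏ i : Fin n, (X - C (v i)) := by
  rw [Matrix.charpoly]
  have : Matrix.charmatrix (Matrix.diagonal v)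
      = Matrix.diagonal (fun i => (X : ℝ[X]) - C (v i)) := by
    ext i j
    by_cases h : i = j
    · subst h; simp [Matrix.charmatrix_apply_eq]
    · simp [Matrix.charmatrix_apply_ne _ _ _ h, Matrix.diagonal_apply_ne _ h]
  rw [this, Matrix.det_diagonal]

lemma squarefree_charpoly_diagonal :
    Squarefree (Matrix.diagonal fun i : Fin n => (i : ℝ)).charpoly := by
  rw [charpoly_diagonal_real]
  rw [← PerfectField.separable_iff_squarefree]
  apply Polynomial.separable_prod_X_sub_C_iff.mpr
  intro i j h
  exact Fin.val_injective (Nat.cast_injective h)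

noncomputable def discPoly (n : ℕ) : MvPolynomial (Fin (n * n)) ℝ :=
  discAux n (Matrix.of fun i j => MvPolynomial.X (finProdFinEquiv (i, j)))

lemma eval_discPoly (A : Matrix (Fin n) (Fin n) ℝ) :
    MvPolynomial.eval (fun k => A (finProdFinEquiv.symm k).1 (finProdFinEquiv.symm k).2)
      (discPoly n) = discAux n A := by
  rw [discPoly, discAux_map]
  congr 1
  ext i j
  show MvPolynomial.eval _ (MvPolynomial.X _) = A i j
  rw [MvPolynomial.eval_X]
  exact congrArg (fun p : Fin n × Fin n => A p.1 p.2) (finProdFinEquiv.symm_apply_apply (i, j))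

/-- **Proposition 5.2 instantiated:** the set of real `n × n` matrices whose
characteristic polynomial is not squarefree has measure zero for the Lebesgue
(additive Haar) measure on the space of matrices. -/
theorem non_squarefree_charpoly_measure_eq_zero
    (n : ℕ) (hn : 1 ≤ n)
    [MeasurableSpace (Matrix (Fin n) (Fin n) ℝ)]
    [BorelSpace (Matrix (Fin n) (Fin n) ℝ)]
    (μ : Measure (Matrix (Fin n) (Fin n) ℝ)) [μ.IsAddHaarMeasure] :
    μ {A : Matrix (Fin n) (Fin n) ℝ | ¬ Squarefree (Matrix.charpoly A)} = 0 := by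
  classical
  haveI : SecondCountableTopology (Matrix (Fin n) (Fin n) ℝ) :=
    inferInstanceAs (SecondCountableTopology (Fin n → Fin n → ℝ))
  haveI : LocallyCompactSpace (Matrix (Fin n) (Fin n) ℝ) :=
    inferInstanceAs (LocallyCompactSpace (Fin n → Fin n → ℝ))
  haveI : SigmaCompactSpace (Matrix (Fin n) (Fin n) ℝ) :=
    inferInstanceAs (SigmaCompactSpace (Fin n → Fin n → ℝ))
  -- the additive equivalence between the coordinate space and matrices
  let e : (Fin (n * n) → ℝ) ≃+ Matrix (Fin n) (Fin n) ℝ :=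
    { toFun := fun x => Matrix.of fun i j => x (finProdFinEquiv (i, j))
      invFun := fun A k => A (finProdFinEquiv.symm k).1 (finProdFinEquiv.symm k).2
      left_inv := by
        intro x; funext k
        show x (finProdFinEquiv (finProdFinEquiv.symm k)) = x k
        rw [Equiv.apply_symm_apply]
      right_inv := by
        intro A; ext i j
        show A (finProdFinEquiv.symm (finProdFinEquiv (i, j))).1
          (finProdFinEquiv.symm (finProdFinEquiv (i, j))).2 = A i j
        rw [Equiv.symm_apply_apply]
      map_add' := by intro x y; ext i j; rfl }
  have he : Continuous e := by
    apply continuous_pi; intro i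
    apply continuous_pi; intro j
    exact continuous_apply _
  have he' : Continuous e.symm := by
    apply continuous_pi; intro k
    show Continuous fun A : Matrix (Fin n) (Fin n) ℝ =>
      A (finProdFinEquiv.symm k).1 (finProdFinEquiv.symm k).2
    have h1 : Continuous fun A : Matrix (Fin n) (Fin n) ℝ =>
        A (finProdFinEquiv.symm k).1 := continuous_apply _
    exact (continuous_apply _).comp h1
  haveI : (Measure.map e volume).IsAddHaarMeasure :=
    e.isAddHaarMeasure_map volume he he'
  have habs : μ ≪ Measure.map e volume :=
    Measure.absolutelyContinuous_isAddHaarMeasure μ (Measure.map e volume)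
  have hsub : {A : Matrix (Fin n) (Fin n) ℝ | ¬ Squarefree (Matrix.charpoly A)}
      ⊆ {A : Matrix (Fin n) (Fin n) ℝ | discAux n A = 0} :=
    fun A hA => (discAux_eq_zero_iff hn A).mpr hA
  refine measure_mono_null hsub (habs ?_)
  -- the zero set of `discAux` is closed
  have hcont : Continuous fun A : Matrix (Fin n) (Fin n) ℝ => discAux n A := by
    have : (fun A : Matrix (Fin n) (Fin n) ℝ => discAux n A)
        = (fun A : Matrix (Fin n) (Fin n) ℝ => MvPolynomial.eval
            (fun k => A (finProdFinEquiv.symm k).1 (finProdFinEquiv.symm k).2) (discPoly n)) := by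
      funext A; rw [eval_discPoly]
    rw [this]
    apply (MvPolynomial.continuous_eval (discPoly n)).comp
    apply continuous_pi; intro k
    have h1 : Continuous fun A : Matrix (Fin n) (Fin n) ℝ =>
        A (finProdFinEquiv.symm k).1 := continuous_apply _
    exact (continuous_apply _).comp h1
  have hZm : MeasurableSet {A : Matrix (Fin n) (Fin n) ℝ | discAux n A = 0} :=
    (isClosed_singleton.preimage hcont).measurableSet
  rw [Measure.map_apply (he.measurable) hZm]
  have hpre : ⇑e ⁻¹' {A : Matrix (Fin n) (Fin n) ℝ | discAux n A = 0}
      = {x : Fin (n * n) → ℝ | MvPolynomial.eval x (discPoly n) = 0} := by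
    ext x
    simp only [Set.mem_preimage, Set.mem_setOf_eq]
    rw [← eval_discPoly (e x)]
    have : (fun k => (e x) (finProdFinEquiv.symm k).1 (finProdFinEquiv.symm k).2) = x := by
      funext k
      show x (finProdFinEquiv ((finProdFinEquiv.symm k).1, (finProdFinEquiv.symm k).2)) = x k
      rw [Prod.mk.eta, Equiv.apply_symm_apply]
    rw [this]
  rw [hpre]
  -- the generic discriminant polynomial is nonzero
  apply mvpoly_zero_set_null
  intro h0
  have := eval_discPoly (Matrix.diagonal fun i : Fin n => (i : ℝ))
  rw [h0, map_zero] at this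
  exact (discAux_eq_zero_iff hn _).mp this.symm squarefree_charpoly_diagonal
end

section
/- Nonlinear noncompact (m,n) ensemble density identity: let m ≥ n ≥ 1, β > 0 a real number, x ∈ ℝⁿ, and set a_r = cosh x_r for r = 1,…,n. Then 2^{n(βm−1)} · ∏_{1 ≤ r < s ≤ n} |sinh((x_r + x_s)/2) · sinh((x_r − x_s)/2)|^β · (cosh(x_r + x_s) · cosh(x_r − x_s))^{β/2} · ∏_{r=1}^{n} |sinh(x_r/2)|^{β(m−n)} · (cosh x_r)^{β(m−n)/2} · |sinh x_r|^{β−1} · (cosh 2x_r)^{(β−1)/2} = 2^{n(β(m+1)−2)/2} · ∏_{1 ≤ r < s ≤ n} |a_r − a_s|^β · (a_r² + a_s² − 1)^{β/2} · ∏_{r=1}^{n} ((a_r² − 1)(2a_r² − 1))^{(β−1)/2} · (a_r(a_r − 1))^{β(m−n)/2}. -/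
open Real

lemma aux_abs_rpow (t c : ℝ) : (t ^ 2 : ℝ) ^ (c / 2) = |t| ^ c := by
  rw [← sq_abs t, ← Real.rpow_natCast |t| 2, ← Real.rpow_mul (abs_nonneg t)]
  norm_num
  congr 1
  ring

lemma aux_pair (β u v : ℝ) :
    |Real.sinh ((u + v) / 2) * Real.sinh ((u - v) / 2)| ^ β *
      (Real.cosh (u + v) * Real.cosh (u - v)) ^ (β / 2) =
    (2 : ℝ) ^ (-β) *
      (|Real.cosh u - Real.cosh v| ^ β *
        (Real.cosh u ^ 2 + Real.cosh v ^ 2 - 1) ^ (β / 2)) := by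
  have h1 : Real.sinh ((u + v) / 2) * Real.sinh ((u - v) / 2)
      = (Real.cosh u - Real.cosh v) / 2 := by
    have ha := Real.cosh_add ((u + v) / 2) ((u - v) / 2)
    have hb := Real.cosh_sub ((u + v) / 2) ((u - v) / 2)
    have e1 : (u + v) / 2 + (u - v) / 2 = u := by ring
    have e2 : (u + v) / 2 - (u - v) / 2 = v := by ring
    rw [e1] at ha; rw [e2] at hb
    linarith
  have h2 : Real.cosh (u + v) * Real.cosh (u - v)
      = Real.cosh u ^ 2 + Real.cosh v ^ 2 - 1 := by
    rw [Real.cosh_add, Real.cosh_sub]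
    nlinarith [Real.cosh_sq_sub_sinh_sq u, Real.cosh_sq_sub_sinh_sq v]
  rw [h1, h2, abs_div]
  rw [show |(2:ℝ)| = 2 by norm_num, Real.div_rpow (abs_nonneg _) (by norm_num : (0:ℝ) ≤ 2),
    Real.rpow_neg (by norm_num : (0:ℝ) ≤ 2), div_eq_mul_inv]
  ring

lemma aux_diag (β k X : ℝ) :
    |Real.sinh (X / 2)| ^ (β * k) * Real.cosh X ^ (β * k / 2) *
      |Real.sinh X| ^ (β - 1) * Real.cosh (2 * X) ^ ((β - 1) / 2) =
    (2 : ℝ) ^ (-(β * k / 2)) *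
      (((Real.cosh X ^ 2 - 1) * (2 * Real.cosh X ^ 2 - 1)) ^ ((β - 1) / 2) *
      (Real.cosh X * (Real.cosh X - 1)) ^ (β * k / 2)) := by
  have hc1 : (1 : ℝ) ≤ Real.cosh X := Real.one_le_cosh X
  have hh : Real.sinh (X / 2) ^ 2 = (Real.cosh X - 1) / 2 := by
    have ha := Real.cosh_add (X / 2) (X / 2)
    have e : X / 2 + X / 2 = X := by ring
    rw [e] at ha
    nlinarith [Real.cosh_sq_sub_sinh_sq (X / 2)]
  have h2X : Real.cosh (2 * X) = 2 * Real.cosh X ^ 2 - 1 := by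
    have := Real.cosh_two_mul X
    nlinarith [Real.cosh_sq_sub_sinh_sq X]
  have e1 : |Real.sinh (X / 2)| ^ (β * k) = ((Real.cosh X - 1) / 2) ^ (β * k / 2) := by
    rw [← aux_abs_rpow (Real.sinh (X / 2)) (β * k), hh]
  have e2 : |Real.sinh X| ^ (β - 1) = (Real.cosh X ^ 2 - 1) ^ ((β - 1) / 2) := by
    rw [← aux_abs_rpow (Real.sinh X) (β - 1), Real.sinh_sq]
  rw [e1, e2, h2X, Real.div_rpow (by linarith) (by norm_num : (0:ℝ) ≤ 2)]
  have m1 : (Real.cosh X - 1) ^ (β * k / 2) * Real.cosh X ^ (β * k / 2)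
      = (Real.cosh X * (Real.cosh X - 1)) ^ (β * k / 2) := by
    rw [← Real.mul_rpow (by linarith) (by positivity), mul_comm (Real.cosh X - 1)]
  have m2 : (Real.cosh X ^ 2 - 1) ^ ((β - 1) / 2) * (2 * Real.cosh X ^ 2 - 1) ^ ((β - 1) / 2)
      = ((Real.cosh X ^ 2 - 1) * (2 * Real.cosh X ^ 2 - 1)) ^ ((β - 1) / 2) :=
    (Real.mul_rpow (by nlinarith) (by nlinarith)).symm
  rw [Real.rpow_neg (by norm_num : (0:ℝ) ≤ 2), div_eq_mul_inv, ← m1, ← m2]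
  ring

lemma aux_card (n : ℕ) :
    ((Finset.univ.filter fun p : Fin n × Fin n => p.1 < p.2).card : ℝ)
      = ((n : ℝ) ^ 2 - n) / 2 := by
  set S := Finset.univ.filter fun p : Fin n × Fin n => p.1 < p.2 with hS
  have key : (Finset.univ : Finset (Fin n)).offDiag.filter
      (fun p => p.1 < p.2) = S := by
    ext p
    simp only [Finset.mem_filter, Finset.mem_offDiag, Finset.mem_univ, true_and, hS]
    exact ⟨fun h => h.2, fun h => ⟨ne_of_lt h, h⟩⟩
  have key2 : (Finset.univ : Finset (Fin n)).offDiag.filter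
      (fun p => ¬ p.1 < p.2) = S.image Prod.swap := by
    ext ⟨i, j⟩
    simp only [Finset.mem_filter, Finset.mem_offDiag, Finset.mem_univ, true_and,
      Finset.mem_image, hS, not_lt, Prod.exists, Prod.swap_prod_mk, Prod.mk.injEq]
    constructor
    · rintro ⟨hne, hle⟩
      exact ⟨j, i, lt_of_le_of_ne hle (fun h => hne h.symm), rfl, rfl⟩
    · rintro ⟨c, d, hcd, rfl, rfl⟩
      exact ⟨ne_of_gt hcd, le_of_lt hcd⟩
  have h3 := Finset.card_filter_add_card_filter_not
    (s := (Finset.univ : Finset (Fin n)).offDiag)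
    (p := fun p : Fin n × Fin n => p.1 < p.2)
  rw [key, key2, Finset.card_image_of_injective _ Prod.swap_injective,
    Finset.offDiag_card, Finset.card_univ, Fintype.card_fin] at h3
  have hn : n ≤ n * n := by nlinarith
  have h2 : (2 : ℝ) * S.card = (n : ℝ) * n - n := by
    have hc := congrArg (Nat.cast : ℕ → ℝ) h3
    push_cast [Nat.cast_sub hn] at hc
    linarith
  rw [sq]
  linarith

/-- **Nonlinear noncompact `(m,n)` ensemble density identity** (Example 3.5,
equation (E:(m,n)nonlinear)): the joint density factor of the nonlinear noncompact
ensemble associated with `O(m,n)₀`, `U(m,n)`, `Sp(m,n)`, expressed in the variables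
`a_r = cosh x_r`. -/
theorem nonlinear_noncompact_mn_density_identity
    (m n : ℕ) (hn : 1 ≤ n) (hmn : n ≤ m) (β : ℝ) (hβ : 0 < β) (x a : Fin n → ℝ)
    (ha : ∀ r, a r = Real.cosh (x r)) :
    (2 : ℝ) ^ ((n : ℝ) * (β * m - 1)) *
      (∏ p ∈ Finset.univ.filter fun p : Fin n × Fin n => p.1 < p.2,
        |Real.sinh ((x p.1 + x p.2) / 2) * Real.sinh ((x p.1 - x p.2) / 2)| ^ β *
          (Real.cosh (x p.1 + x p.2) * Real.cosh (x p.1 - x p.2)) ^ (β / 2)) *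
      ∏ r : Fin n,
        |Real.sinh (x r / 2)| ^ (β * ((m : ℝ) - n)) *
          Real.cosh (x r) ^ (β * ((m : ℝ) - n) / 2) *
          |Real.sinh (x r)| ^ (β - 1) *
          Real.cosh (2 * x r) ^ ((β - 1) / 2) =
    (2 : ℝ) ^ ((n : ℝ) * (β * ((m : ℝ) + 1) - 2) / 2) *
      (∏ p ∈ Finset.univ.filter fun p : Fin n × Fin n => p.1 < p.2,
        |a p.1 - a p.2| ^ β * (a p.1 ^ 2 + a p.2 ^ 2 - 1) ^ (β / 2)) *
      ∏ r : Fin n,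
        ((a r ^ 2 - 1) * (2 * a r ^ 2 - 1)) ^ ((β - 1) / 2) *
          (a r * (a r - 1)) ^ (β * ((m : ℝ) - n) / 2) := by
  simp only [ha]
  set S := Finset.univ.filter fun p : Fin n × Fin n => p.1 < p.2 with hS
  have hP : (∏ p ∈ S,
      |Real.sinh ((x p.1 + x p.2) / 2) * Real.sinh ((x p.1 - x p.2) / 2)| ^ β *
        (Real.cosh (x p.1 + x p.2) * Real.cosh (x p.1 - x p.2)) ^ (β / 2)) =
      ((2 : ℝ) ^ (-β)) ^ S.card * ∏ p ∈ S,
        |Real.cosh (x p.1) - Real.cosh (x p.2)| ^ β *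
          (Real.cosh (x p.1) ^ 2 + Real.cosh (x p.2) ^ 2 - 1) ^ (β / 2) := by
    rw [← Finset.prod_const, ← Finset.prod_mul_distrib]
    exact Finset.prod_congr rfl fun p _ => aux_pair β (x p.1) (x p.2)
  have hQ : (∏ r : Fin n,
      |Real.sinh (x r / 2)| ^ (β * ((m : ℝ) - n)) *
        Real.cosh (x r) ^ (β * ((m : ℝ) - n) / 2) *
        |Real.sinh (x r)| ^ (β - 1) *
        Real.cosh (2 * x r) ^ ((β - 1) / 2)) =
      ((2 : ℝ) ^ (-(β * ((m : ℝ) - n) / 2))) ^ n * ∏ r : Fin n,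
        ((Real.cosh (x r) ^ 2 - 1) * (2 * Real.cosh (x r) ^ 2 - 1)) ^ ((β - 1) / 2) *
          (Real.cosh (x r) * (Real.cosh (x r) - 1)) ^ (β * ((m : ℝ) - n) / 2) := by
    rw [Finset.prod_congr rfl fun r _ => aux_diag β ((m : ℝ) - n) (x r),
      Finset.prod_mul_distrib, Finset.prod_const, Finset.card_univ, Fintype.card_fin]
  rw [hP, hQ]
  have c1 : ((2 : ℝ) ^ (-β)) ^ S.card = (2 : ℝ) ^ (-β * (S.card : ℝ)) := by
    rw [← Real.rpow_natCast ((2:ℝ) ^ (-β)) S.card,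
      ← Real.rpow_mul (by norm_num : (0:ℝ) ≤ 2)]
  have c2 : ((2 : ℝ) ^ (-(β * ((m : ℝ) - n) / 2))) ^ n
      = (2 : ℝ) ^ (-(β * ((m : ℝ) - n) / 2) * (n : ℝ)) := by
    rw [← Real.rpow_natCast ((2:ℝ) ^ (-(β * ((m : ℝ) - n) / 2))) n,
      ← Real.rpow_mul (by norm_num : (0:ℝ) ≤ 2)]
  rw [c1, c2]
  have hc : ((S.card : ℕ) : ℝ) = ((n : ℝ) ^ 2 - n) / 2 := aux_card n
  rw [show (2 : ℝ) ^ ((n : ℝ) * (β * ((m : ℝ) + 1) - 2) / 2)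
      = (2 : ℝ) ^ ((n : ℝ) * (β * m - 1)) * (2 : ℝ) ^ (-β * (S.card : ℝ)) *
        (2 : ℝ) ^ (-(β * ((m : ℝ) - n) / 2) * (n : ℝ)) from by
    rw [← Real.rpow_add (by norm_num : (0:ℝ) < 2),
      ← Real.rpow_add (by norm_num : (0:ℝ) < 2)]
    congr 1
    rw [hc]
    ring]
  ring
end

section
/- Jacobi ensemble density identity: let m ≥ n ≥ 1, β ≥ 1 a real number, x ∈ ℝⁿ, and set a_r = cos x_r for r = 1,…,n. Then 2^{β n(n−1) + β n(m−n) + (β−1)n} · ∏_{1 ≤ r < s ≤ n} |sin((x_r + x_s)/2) · sin((x_r − x_s)/2)|^β · ∏_{r=1}^{n} |sin(x_r/2)|^{β(m−n)} · |sin x_r|^{β−1} = 2^{n(β(m+1)−2)/2} · ∏_{1 ≤ r < s ≤ n} |a_r − a_s|^β · ∏_{r=1}^{n} |1 + a_r|^{(β−1)/2} · |1 − a_r|^{(β(m−n+1)−1)/2}. -/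
open Real

private lemma card_lt_pairs (n : ℕ) :
    (Finset.univ.filter fun p : Fin n × Fin n => p.1 < p.2).card * 2 = n * (n-1) := by
  rw [Finset.card_filter, Fintype.sum_prod_type]
  have h1 : ∀ a : Fin n, (∑ b : Fin n, if a < b then 1 else 0) = n - 1 - (a:ℕ) := by
    intro a
    rw [← Finset.card_filter]
    have : (Finset.univ.filter fun b : Fin n => a < b) = Finset.Ioi a := by
      ext b; simp
    rw [this, Fin.card_Ioi]
  simp only [h1]
  rw [Fin.sum_univ_eq_sum_range (fun i => n - 1 - i),
    Finset.sum_range_reflect (fun i => i) n, Finset.sum_range_id_mul_two]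

private lemma one_sub_cos (t : ℝ) : 1 - Real.cos t = 2 * Real.sin (t/2)^2 := by
  have h := Real.cos_two_mul' (t/2)
  have h2 := Real.sin_sq_add_cos_sq (t/2)
  have ht : 2 * (t/2) = t := by ring
  rw [ht] at h; linarith

private lemma one_add_cos (t : ℝ) : 1 + Real.cos t = 2 * Real.cos (t/2)^2 := by
  have h := Real.cos_two_mul (t/2)
  have ht : 2 * (t/2) = t := by ring
  rw [ht] at h; linarith

private lemma two_sq_rpow (s : ℝ) (p : ℝ) :
    (2 * s ^ 2) ^ p = 2 ^ p * |s| ^ (2 * p) := by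
  rw [Real.mul_rpow (by norm_num) (sq_nonneg s), ← sq_abs,
    ← Real.rpow_natCast |s| 2, ← Real.rpow_mul (abs_nonneg s)]
  norm_num

/-- **Jacobi ensemble density identity** (Example 4.5, equation (E:J:Jacobi)): the
joint density factor of the compact ensemble associated with `SO(m+n)`, `U(m+n)`,
`Sp(m+n)`, expressed in the variables `a_r = cos x_r`. -/
theorem jacobi_density_identity
    (m n : ℕ) (hn : 1 ≤ n) (hmn : n ≤ m) (β : ℝ) (hβ : 1 ≤ β) (x a : Fin n → ℝ)
    (ha : ∀ r, a r = Real.cos (x r)) :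
    (2 : ℝ) ^ (β * n * ((n : ℝ) - 1) + β * n * ((m : ℝ) - n) + (β - 1) * n) *
      (∏ p ∈ Finset.univ.filter fun p : Fin n × Fin n => p.1 < p.2,
        |Real.sin ((x p.1 + x p.2) / 2) * Real.sin ((x p.1 - x p.2) / 2)| ^ β) *
      ∏ r : Fin n,
        |Real.sin (x r / 2)| ^ (β * ((m : ℝ) - n)) * |Real.sin (x r)| ^ (β - 1) =
    (2 : ℝ) ^ ((n : ℝ) * (β * ((m : ℝ) + 1) - 2) / 2) *
      (∏ p ∈ Finset.univ.filter fun p : Fin n × Fin n => p.1 < p.2,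
        |a p.1 - a p.2| ^ β) *
      ∏ r : Fin n,
        |1 + a r| ^ ((β - 1) / 2) *
          |1 - a r| ^ ((β * ((m : ℝ) - n + 1) - 1) / 2) := by
  have hb1 : (0:ℝ) ≤ β - 1 := by linarith
  set c : ℝ := (m : ℝ) - n with hc
  have hc0 : (0:ℝ) ≤ c := by
    have : (n:ℝ) ≤ m := Nat.cast_le.mpr hmn
    simp [hc]; linarith
  have he0 : (0:ℝ) ≤ β * (c + 1) - 1 := by nlinarith
  -- pair factor
  have hpair : ∀ p : Fin n × Fin n, |Real.cos (x p.1) - Real.cos (x p.2)| ^ β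
      = 2 ^ β * |Real.sin ((x p.1 + x p.2) / 2) * Real.sin ((x p.1 - x p.2) / 2)| ^ β := by
    intro p
    rw [Real.cos_sub_cos]
    rw [show -2 * Real.sin ((x p.1 + x p.2) / 2) * Real.sin ((x p.1 - x p.2) / 2)
        = (-2) * (Real.sin ((x p.1 + x p.2) / 2) * Real.sin ((x p.1 - x p.2) / 2)) by ring]
    rw [abs_mul, Real.mul_rpow (abs_nonneg _) (abs_nonneg _)]
    norm_num
  -- per-coordinate left factor
  have hl : ∀ t : ℝ, |Real.sin (t / 2)| ^ (β * c) * |Real.sin t| ^ (β - 1)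
      = 2 ^ (β - 1) * (|Real.sin (t/2)| ^ (β * (c + 1) - 1) * |Real.cos (t/2)| ^ (β - 1)) := by
    intro t
    have hs : Real.sin t = 2 * Real.sin (t/2) * Real.cos (t/2) := by
      rw [← Real.sin_two_mul]; ring_nf
    rw [hs, abs_mul, abs_mul, abs_two,
      Real.mul_rpow (by positivity) (abs_nonneg _),
      Real.mul_rpow (by norm_num) (abs_nonneg _),
      show β * (c + 1) - 1 = β * c + (β - 1) by ring,
      Real.rpow_add_of_nonneg (abs_nonneg _) (by positivity) hb1]
    ring
  -- per-coordinate right factor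
  have hr : ∀ t : ℝ, |1 + Real.cos t| ^ ((β - 1) / 2) * |1 - Real.cos t| ^ ((β * (c + 1) - 1) / 2)
      = 2 ^ ((β - 1)/2 + (β * (c + 1) - 1)/2)
        * (|Real.sin (t/2)| ^ (β * (c + 1) - 1) * |Real.cos (t/2)| ^ (β - 1)) := by
    intro t
    have h1 : |1 + Real.cos t| = 2 * Real.cos (t/2) ^ 2 := by
      rw [one_add_cos]; exact abs_of_nonneg (by positivity)
    have h2 : |1 - Real.cos t| = 2 * Real.sin (t/2) ^ 2 := by
      rw [one_sub_cos]; exact abs_of_nonneg (by positivity)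
    rw [h1, h2, two_sq_rpow, two_sq_rpow,
      Real.rpow_add_of_nonneg (by norm_num) (by positivity) (by positivity),
      show 2 * ((β - 1)/2) = β - 1 by ring,
      show 2 * ((β * (c + 1) - 1)/2) = β * (c + 1) - 1 by ring]
    ring
  -- rewrite the products
  simp only [ha]
  rw [Finset.prod_congr rfl (fun r _ => hl (x r)),
    Finset.prod_congr rfl (fun (r : Fin n) (_ : r ∈ Finset.univ) => hr (x r)),
    Finset.prod_congr rfl (fun p _ => hpair p)]
  simp only [Finset.prod_mul_distrib, Finset.prod_const, Finset.card_univ, Fintype.card_fin]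
  set P := ∏ p ∈ Finset.filter (fun p : Fin n × Fin n => p.1 < p.2) Finset.univ,
    |Real.sin ((x p.1 + x p.2) / 2) * Real.sin ((x p.1 - x p.2) / 2)| ^ β with hP
  set S1 := ∏ r : Fin n, |Real.sin (x r / 2)| ^ (β * (c + 1) - 1) with hS1
  set S2 := ∏ r : Fin n, |Real.cos (x r / 2)| ^ (β - 1) with hS2
  set K := (Finset.filter (fun p : Fin n × Fin n => p.1 < p.2) Finset.univ).card with hK
  have hKc : (K:ℝ) * 2 = (n:ℝ) * ((n:ℝ) - 1) := by
    have h0 := card_lt_pairs n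
    rw [← hK] at h0
    have h2 : ((K * 2 : ℕ) : ℝ) = ((n * (n-1) : ℕ) : ℝ) := by rw [h0]
    push_cast [Nat.cast_sub hn] at h2
    exact_mod_cast h2
  rw [← Real.rpow_natCast ((2:ℝ) ^ (β - 1)) n, ← Real.rpow_natCast ((2:ℝ) ^ β) K,
    ← Real.rpow_natCast ((2:ℝ) ^ ((β - 1) / 2 + (β * (c + 1) - 1) / 2)) n,
    ← Real.rpow_mul (by norm_num : (0:ℝ) ≤ 2), ← Real.rpow_mul (by norm_num : (0:ℝ) ≤ 2),
    ← Real.rpow_mul (by norm_num : (0:ℝ) ≤ 2)]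
  have key : (2:ℝ) ^ (β * ↑n * (↑n - 1) + β * ↑n * c + (β - 1) * ↑n) * 2 ^ ((β - 1) * ↑n)
      = (2:ℝ) ^ ((↑n : ℝ) * (β * (↑m + 1) - 2) / 2) * 2 ^ (β * ↑K)
        * 2 ^ (((β - 1) / 2 + (β * (c + 1) - 1) / 2) * ↑n) := by
    rw [← Real.rpow_add (by norm_num : (0:ℝ) < 2), ← Real.rpow_add (by norm_num : (0:ℝ) < 2),
      ← Real.rpow_add (by norm_num : (0:ℝ) < 2)]
    congr 1
    rw [hc]
    linear_combination (-β/2) * hKc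
  linear_combination (P * S1 * S2) * key
end
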